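/- Let θ* ∈ ℝⁿ with ‖θ*‖ ≥ θ_min > 0, let a* = a*(θ*) be the unique maximizer of ⟨θ*, ·⟩ over 𝒜 with ∇g(a*) = ω θ*, ω > 0, and assume: λ^Δ_min·I ⪯ ∇²g(y) for all y in the ball B(a*, m'); ‖∇g(a*)‖ ≤ ∇_max; ‖a‖ ≤ a_max for all a ∈ 𝒜; and there are m'' ∈ (0, m') and c_min > 0 such that the instantaneous regret r_{θ*}(a) := ⟨θ*, a* − a⟩ satisfies r_{θ*}(a) ≥ c_min whenever a ∈ 𝒜 and ‖a − a*‖ > m''. Set c₃ = min{ θ_min λ^Δ_min/(2∇_max), c_min/(4 a_max²) }. Then for any finite sequence of actions a₁, …, a_T ∈ 𝒜 and any z ∈ ℝⁿ with ⟨z, a*⟩ = 0 and ‖z‖ ≤ 1: zᵀ( ∑_{t=1}^{T} a_t a_tᵀ ) z ≤ c₃⁻¹ · ∑_{t=1}^{T} r_{θ*}(a_t). -/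

import Mathlib

open RealInnerProductSpace Matrix

private theorem quad_eq' {n : ℕ} (T : ℕ) (a : ℕ → EuclideanSpace ℝ (Fin n))
    (z : EuclideanSpace ℝ (Fin n)) :
    (fun i => z i) ⬝ᵥ
        (∑ t ∈ Finset.Icc 1 T,
          Matrix.vecMulVec (fun i => a t i) (fun i => a t i)).mulVec (fun i => z i)
      = ∑ t ∈ Finset.Icc 1 T, (⟪z, a t⟫)^2 := by
  simp only [dotProduct, Matrix.mulVec, Matrix.vecMulVec_apply, Finset.sum_apply,
    PiLp.inner_apply, RCLike.inner_apply, conj_trivial, Matrix.sum_apply,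
    Finset.sum_mul, Finset.mul_sum, pow_two]
  refine ((Finset.sum_congr rfl fun x _ => Finset.sum_comm).trans ?_)
  rw [Finset.sum_comm]
  refine Finset.sum_congr rfl fun t _ => Finset.sum_comm.trans ?_
  refine Finset.sum_congr rfl fun i _ => Finset.sum_congr rfl fun j _ => by ring

private theorem taylor_lb {n : ℕ} (g : EuclideanSpace ℝ (Fin n) → ℝ) (hg : ContDiff ℝ 3 g)
    (x h : EuclideanSpace ℝ (Fin n)) (lam : ℝ)
    (hH : ∀ y : EuclideanSpace ℝ (Fin n), ‖y - x‖ ≤ ‖h‖ →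
      ∀ v : EuclideanSpace ℝ (Fin n), lam * ‖v‖ ^ 2 ≤ ⟪fderiv ℝ (gradient g) y v, v⟫) :
    g x + ⟪gradient g x, h⟫ + lam / 2 * ‖h‖ ^ 2 ≤ g (x + h) := by
  have hdg : Differentiable ℝ g := hg.differentiable (by norm_num)
  have hG : ContDiff ℝ 2 (gradient g) := by
    have h1 : ContDiff ℝ 2 (fderiv ℝ g) := hg.fderiv_right (by norm_num)
    exact (InnerProductSpace.toDual ℝ (EuclideanSpace ℝ (Fin n))).symm.contDiff.comp h1
  have hdG : Differentiable ℝ (gradient g) := hG.differentiable (by norm_num)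
  set L : ℝ → EuclideanSpace ℝ (Fin n) := fun t => x + t • h with hLdef
  have hL : ∀ t : ℝ, HasDerivAt L h t := by
    intro t
    simpa [hLdef] using ((hasDerivAt_id t).smul_const h).const_add x
  have hL0 : L 0 = x := by simp [hLdef]
  have hL1 : L 1 = x + h := by simp [hLdef]
  set D : ℝ → ℝ := fun t => ⟪gradient g (L t), h⟫ with hDdef
  have hφ : ∀ t : ℝ, HasDerivAt (fun s => g (L s)) (D t) t := by
    intro t
    have h1 : HasFDerivAt g (InnerProductSpace.toDual ℝ (EuclideanSpace ℝ (Fin n)) (gradient g (L t))) (L t) :=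
      (hdg (L t)).hasGradientAt
    have h2 := h1.comp_hasDerivAt t (hL t)
    simp only [InnerProductSpace.toDual_apply_apply] at h2
    exact h2
  have hD : ∀ t : ℝ, HasDerivAt D (⟪fderiv ℝ (gradient g) (L t) h, h⟫) t := by
    intro t
    have h1 : HasDerivAt (fun s => gradient g (L s)) (fderiv ℝ (gradient g) (L t) h) t :=
      (hdG (L t)).hasFDerivAt.comp_hasDerivAt t (hL t)
    have h2 := h1.inner ℝ (hasDerivAt_const t h)
    refine h2.congr_deriv ?_
    simp
  -- first derivative lower bound: D t - D 0 ≥ lam * t * ‖h‖^2 on [0,1]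
  set D2 : ℝ → ℝ := fun t => D t - D 0 - lam * t * ‖h‖ ^ 2 with hD2def
  have hD2 : ∀ t : ℝ, HasDerivAt D2 (⟪fderiv ℝ (gradient g) (L t) h, h⟫ - lam * ‖h‖ ^ 2) t := by
    intro t
    have := ((hD t).sub_const (D 0)).sub ((hasDerivAt_id t).const_mul lam |>.mul_const (‖h‖ ^ 2))
    refine this.congr_deriv ?_
    ring
  have hIoo : ∀ t ∈ Set.Ioo (0:ℝ) 1, ‖L t - x‖ ≤ ‖h‖ := by
    intro t ht
    have : L t - x = t • h := by simp [hLdef]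
    rw [this, norm_smul]
    have h0 : |t| ≤ 1 := by rw [abs_of_pos ht.1]; exact ht.2.le
    calc ‖t‖ * ‖h‖ ≤ 1 * ‖h‖ := by
          apply mul_le_mul_of_nonneg_right _ (norm_nonneg h); simpa using h0
      _ = ‖h‖ := one_mul _
  have hD2mono : MonotoneOn D2 (Set.Icc 0 1) := by
    apply monotoneOn_of_deriv_nonneg (convex_Icc 0 1)
    · exact Continuous.continuousOn (by
        have : Continuous D2 := by
          have := fun t => (hD2 t).differentiableAt
          exact (Differentiable.continuous fun t => (hD2 t).differentiableAt)
        exact this)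
    · exact (Differentiable.differentiableOn fun t => (hD2 t).differentiableAt)
    · intro t ht
      rw [interior_Icc] at ht
      rw [(hD2 t).deriv]
      have := hH (L t) (hIoo t ht) h
      linarith
  have hD2nonneg : ∀ t ∈ Set.Icc (0:ℝ) 1, 0 ≤ D2 t := by
    intro t ht
    have h0 : D2 0 = 0 := by simp [hD2def]
    have := hD2mono (Set.left_mem_Icc.2 zero_le_one) ht ht.1
    rw [h0] at this; exact this
  -- second: ψ
  set ψ : ℝ → ℝ := fun t => g (L t) - g (L 0) - t * D 0 - lam / 2 * t ^ 2 * ‖h‖ ^ 2 with hψdef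
  have hψ : ∀ t : ℝ, HasDerivAt ψ (D2 t) t := by
    intro t
    have h1 : HasDerivAt (fun s : ℝ => lam / 2 * s ^ 2 * ‖h‖ ^ 2) (lam * t * ‖h‖ ^ 2) t := by
      have := ((hasDerivAt_pow 2 t).const_mul (lam / 2)).mul_const (‖h‖ ^ 2)
      refine this.congr_deriv ?_
      ring
    have := (((hφ t).sub_const (g (L 0))).sub ((hasDerivAt_id t).mul_const (D 0))).sub h1
    refine this.congr_deriv ?_
    simp only [hD2def]
    ring
  have hψmono : MonotoneOn ψ (Set.Icc 0 1) := by
    apply monotoneOn_of_deriv_nonneg (convex_Icc 0 1)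
    · exact (Differentiable.continuous fun t => (hψ t).differentiableAt).continuousOn
    · exact (Differentiable.differentiableOn fun t => (hψ t).differentiableAt)
    · intro t ht
      rw [interior_Icc] at ht
      rw [(hψ t).deriv]
      exact hD2nonneg t (Set.mem_Icc_of_Ioo ht)
  have key := hψmono (Set.left_mem_Icc.2 zero_le_one) (Set.right_mem_Icc.2 zero_le_one) zero_le_one
  simp only [hψdef, hL0, hL1] at key
  have hD0 : D 0 = ⟪gradient g x, h⟫ := by simp [hDdef, hL0]
  rw [hD0] at key
  nlinarith [key]

set_option maxHeartbeats 1000000 in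
/-- inference is bounded by cumulative regret. Under the stated curvature,
gradient, boundedness and regret-gap hypotheses, for any finite sequence of actions
`a₁, …, a_T ∈ 𝒜` and any `z ⟂ a*(θ*)` with `‖z‖ ≤ 1`,
`zᵀ(∑_t a_t a_tᵀ)z ≤ c₃⁻¹ ∑_t r_{θ*}(a_t)`. -/
theorem design_matrix_bounded_by_regret {n : ℕ}
    (g : EuclideanSpace ℝ (Fin n) → ℝ) (hg : ContDiff ℝ 3 g)
    (κ : ℝ) (hκ : 0 < κ) (hsc : StrongConvexOn Set.univ κ g)
    (hcompact : IsCompact {x : EuclideanSpace ℝ (Fin n) | g x ≤ 0})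
    (θ : EuclideanSpace ℝ (Fin n)) (θmin : ℝ) (hθmin : 0 < θmin) (hθlb : θmin ≤ ‖θ‖)
    (astar : EuclideanSpace ℝ (Fin n))
    (hmem : g astar ≤ 0) (hmax : ∀ b, g b ≤ 0 → ⟪θ, b⟫ ≤ ⟪θ, astar⟫)
    (huniq : ∀ a', (g a' ≤ 0 ∧ ∀ b, g b ≤ 0 → ⟪θ, b⟫ ≤ ⟪θ, a'⟫) → a' = astar)
    (hbdry : g astar = 0)
    (ω : ℝ) (hω : 0 < ω) (hgrad : gradient g astar = ω • θ)
    (m' gradmax lamΔmin amax : ℝ) (hm' : 0 < m') (hgradmax : 0 < gradmax)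
    (hlamΔmin : 0 < lamΔmin) (hamax : 0 < amax)
    (hHess : ∀ y : EuclideanSpace ℝ (Fin n), ‖y - astar‖ ≤ m' →
      ∀ v : EuclideanSpace ℝ (Fin n),
        lamΔmin * ‖v‖ ^ 2 ≤ ⟪fderiv ℝ (gradient g) y v, v⟫)
    (hgradbnd : ‖gradient g astar‖ ≤ gradmax)
    (hanorm : ∀ a : EuclideanSpace ℝ (Fin n), g a ≤ 0 → ‖a‖ ≤ amax)
    (m'' cmin : ℝ) (hm''0 : 0 < m'') (hm'' : m'' < m') (hcmin : 0 < cmin)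
    (hgap : ∀ a : EuclideanSpace ℝ (Fin n), g a ≤ 0 → m'' < ‖a - astar‖ →
      cmin ≤ ⟪θ, astar⟫ - ⟪θ, a⟫)
    (c₃ : ℝ) (hc₃ : c₃ = min (θmin * lamΔmin / (2 * gradmax)) (cmin / (4 * amax ^ 2)))
    (T : ℕ) (a : ℕ → EuclideanSpace ℝ (Fin n)) (ha : ∀ t ∈ Finset.Icc 1 T, g (a t) ≤ 0)
    (z : EuclideanSpace ℝ (Fin n)) (hzperp : ⟪z, astar⟫ = 0) (hz : ‖z‖ ≤ 1) :
    (fun i => z i) ⬝ᵥ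
        (∑ t ∈ Finset.Icc 1 T,
          Matrix.vecMulVec (fun i => a t i) (fun i => a t i)).mulVec (fun i => z i)
      ≤ c₃⁻¹ * ∑ t ∈ Finset.Icc 1 T, (⟪θ, astar⟫ - ⟪θ, a t⟫) := by
  have hc₃pos : 0 < c₃ := by
    rw [hc₃]; apply lt_min <;> positivity
  -- key per-action bound
  have key : ∀ b : EuclideanSpace ℝ (Fin n), g b ≤ 0 → ⟪z, b⟫ ^ 2 ≤ c₃⁻¹ * (⟪θ, astar⟫ - ⟪θ, b⟫) := by
    intro b hb
    rw [inv_mul_eq_div, le_div_iff₀ hc₃pos]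
    by_cases hcase : m'' < ‖b - astar‖
    · -- far case
      have hr : cmin ≤ ⟪θ, astar⟫ - ⟪θ, b⟫ := hgap b hb hcase
      have hzb : ⟪z, b⟫ ^ 2 ≤ amax ^ 2 := by
        have h1 : |⟪z, b⟫| ≤ ‖z‖ * ‖b‖ := abs_real_inner_le_norm z b
        have h2 : ‖z‖ * ‖b‖ ≤ 1 * amax :=
          mul_le_mul hz (hanorm b hb) (norm_nonneg b) zero_le_one
        nlinarith [abs_nonneg ⟪z, b⟫, sq_abs ⟪z, b⟫]
      have hc3le : c₃ ≤ cmin / (4 * amax ^ 2) := hc₃ ▸ min_le_right _ _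
      have h8 := (le_div_iff₀ (by positivity : (0:ℝ) < 4 * amax ^ 2)).1 hc3le
      have h9 := mul_le_mul_of_nonneg_right hzb hc₃pos.le
      nlinarith [h8, h9, hr, hcmin.le]
    · -- near case
      push_neg at hcase
      set h : EuclideanSpace ℝ (Fin n) := b - astar with hhdef
      have hhm : ‖h‖ ≤ m' := le_trans hcase hm''.le
      have htay := taylor_lb g hg astar h lamΔmin
        (fun y hy v => hHess y (hy.trans hhm) v)
      have hsum : astar + h = b := by simp [hhdef]
      rw [hsum, hbdry] at htay
      -- ⟪∇g a*, h⟫ ≤ -lam/2 ‖h‖²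
      have h1 : ⟪gradient g astar, h⟫ + lamΔmin / 2 * ‖h‖ ^ 2 ≤ 0 := by linarith [hb]
      have h2 : ⟪gradient g astar, h⟫ = ω * ⟪θ, h⟫ := by
        rw [hgrad, real_inner_smul_left]
      have h3 : ⟪θ, h⟫ = ⟪θ, b⟫ - ⟪θ, astar⟫ := by
        rw [hhdef, inner_sub_right]
      -- ω * (⟪θ,astar⟫ - ⟪θ,b⟫) ≥ lam/2 ‖h‖²
      have h4 : lamΔmin / 2 * ‖h‖ ^ 2 ≤ ω * (⟪θ, astar⟫ - ⟪θ, b⟫) := by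
        rw [h2, h3] at h1
        rw [mul_sub] at h1 ⊢
        linarith
      -- bound on ω
      have h5 : ω * θmin ≤ gradmax := by
        have heq : ‖gradient g astar‖ = ω * ‖θ‖ := by
          rw [hgrad, norm_smul, Real.norm_eq_abs, abs_of_pos hω]
        calc ω * θmin ≤ ω * ‖θ‖ := mul_le_mul_of_nonneg_left hθlb hω.le
          _ = ‖gradient g astar‖ := heq.symm
          _ ≤ gradmax := hgradbnd
      -- regret nonneg
      have hreg : 0 ≤ ⟪θ, astar⟫ - ⟪θ, b⟫ := sub_nonneg.2 (hmax b hb)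
      -- r ≥ (lam θmin / (2 gradmax)) ‖h‖²
      have h6 : θmin * lamΔmin / (2 * gradmax) * ‖h‖ ^ 2 ≤ ⟪θ, astar⟫ - ⟪θ, b⟫ := by
        rw [div_mul_eq_mul_div, div_le_iff₀ (by positivity : (0:ℝ) < 2 * gradmax)]
        have hA := mul_le_mul_of_nonneg_left h4 hθmin.le
        have hB := mul_le_mul_of_nonneg_right h5 hreg
        nlinarith [hA, hB]
      have hzb : ⟪z, b⟫ ^ 2 ≤ ‖h‖ ^ 2 := by
        have hzh : ⟪z, b⟫ = ⟪z, h⟫ := by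
          rw [hhdef, inner_sub_right, hzperp]; ring
        have h1 : |⟪z, h⟫| ≤ ‖z‖ * ‖h‖ := abs_real_inner_le_norm z h
        have h2 : ‖z‖ * ‖h‖ ≤ 1 * ‖h‖ :=
          mul_le_mul_of_nonneg_right hz (norm_nonneg h)
        rw [hzh]
        nlinarith [abs_nonneg ⟪z, h⟫, sq_abs ⟪z, h⟫]
      have hc3le : c₃ ≤ θmin * lamΔmin / (2 * gradmax) := hc₃ ▸ min_le_left _ _
      have h9 : ⟪z, b⟫ ^ 2 * c₃ ≤ ‖h‖ ^ 2 * (θmin * lamΔmin / (2 * gradmax)) :=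
        mul_le_mul hzb hc3le hc₃pos.le (sq_nonneg ‖h‖)
      nlinarith [h9, h6]
  rw [quad_eq' T a z, Finset.mul_sum]
  exact Finset.sum_le_sum fun t ht => key (a t) (ha t ht)
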